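/- In any S-Motzkin path, at every prefix, the number of H steps seen so far is at least the number of U steps seen so far, and exceeds it by at most 1. -/

import Mathlib

inductive Step : Type | H | U | D
deriving DecidableEq, Repr

def OneUBetweenH (w : List Step) : Prop :=
  ∀ p mid s : List Step, w = p ++ Step.H :: mid ++ Step.H :: s →
    Step.H ∉ mid → mid.count Step.U = 1

def DCond (w : List Step) : Prop :=
  ∀ p s : List Step, w = p ++ Step.D :: s →
    p.count Step.D + 1 ≤ p.count Step.H ∧ p.count Step.D + 1 ≤ p.count Step.U

def IsMotzkin (w : List Step) : Prop :=
  w.count Step.U = w.count Step.D ∧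
  ∀ p : List Step, p <+: w → p.count Step.D ≤ p.count Step.U

def IsSMotzkin (n : ℕ) (w : List Step) : Prop :=
  IsMotzkin w ∧ w.count Step.H = n ∧ w.count Step.U = n ∧ w.count Step.D = n ∧
  (w ≠ [] → w.head? = some Step.H) ∧ OneUBetweenH w ∧ DCond w

lemma split_last {l : List Step} (h : Step.H ∈ l) :
    ∃ q t, l = q ++ Step.H :: t ∧ Step.H ∉ t := by
  induction l with
  | nil => simp at h
  | cons hd tl ih =>
    by_cases htl : Step.H ∈ tl
    · obtain ⟨q, t, rfl, ht⟩ := ih htl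
      exact ⟨hd :: q, t, rfl, ht⟩
    · rcases List.mem_cons.mp h with h1 | h1
      · exact ⟨[], tl, by rw [h1]; simp, htl⟩
      · exact absurd h1 htl

lemma split_first {l : List Step} (h : Step.H ∈ l) :
    ∃ a b, l = a ++ Step.H :: b ∧ Step.H ∉ a := by
  induction l with
  | nil => simp at h
  | cons hd tl ih =>
    by_cases hhd : hd = Step.H
    · exact ⟨[], tl, by rw [hhd]; simp, by simp⟩
    · rcases List.mem_cons.mp h with h1 | h1
      · exact absurd h1.symm hhd
      · obtain ⟨a, b, rfl, ha⟩ := ih h1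
        exact ⟨hd :: a, b, rfl, by simp [ha, Ne.symm hhd]⟩

lemma L1 (w : List Step) (hone : OneUBetweenH w)
    (hstart : w ≠ [] → w.head? = some Step.H) :
    ∀ k q s, q.length ≤ k → w = q ++ Step.H :: s →
      q.count Step.U = q.count Step.H := by
  intro k
  induction k with
  | zero =>
    intro q s hk hq
    rw [List.length_eq_zero_iff.mp (Nat.le_zero.mp hk)]; simp
  | succ k ih =>
    intro q s hk hq
    by_cases hmem : Step.H ∈ q
    · obtain ⟨q'', t, rfl, ht⟩ := split_last hmem
      have hw : w = q'' ++ Step.H :: t ++ Step.H :: s := by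
        rw [hq]
      have hmid : t.count Step.U = 1 := hone q'' t s hw ht
      have hih : q''.count Step.U = q''.count Step.H := by
        apply ih q'' (t ++ Step.H :: s) _ (by rw [hw]; simp)
        simp at hk; omega
      have htH : t.count Step.H = 0 := List.count_eq_zero.mpr ht
      simp [List.count_append, List.count_cons, hmid, htH, hih]
    · match q with
      | [] => rfl
      | a :: q' =>
        exfalso
        have h1 : w.head? = some a := by rw [hq]; rfl
        have h2 := hstart (by rw [hq]; simp)
        rw [h1] at h2
        have ha : a = Step.H := by injection h2
        exact hmem (ha ▸ (List.mem_cons_self (a := a) (l := q')))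

theorem smotzkin_prefix_H_U (n : ℕ) (w : List Step) (hw : IsSMotzkin n w) :
    ∀ p : List Step, p <+: w →
      p.count Step.U ≤ p.count Step.H ∧ p.count Step.H ≤ p.count Step.U + 1 := by
  obtain ⟨hmo, hH, hU, hD, hstart, hone, hdc⟩ := hw
  intro p hp
  obtain ⟨s, rfl⟩ := hp
  match p with
  | [] => simp
  | a :: p' =>
    -- the path starts with H, so a = H
    have h1 : (a :: p' ++ s).head? = some a := rfl
    have h2 := hstart (by simp)
    rw [h1] at h2
    have ha : a = Step.H := by injection h2
    subst ha
    -- split p at its last H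
    have hmem : Step.H ∈ Step.H :: p' := List.mem_cons_self
    obtain ⟨q, t, hqt, ht⟩ := split_last hmem
    have hqU : q.count Step.U = q.count Step.H := by
      apply L1 _ hone hstart q.length q (t ++ s) le_rfl
      rw [show (Step.H :: p' ++ s) = (Step.H :: p') ++ s from rfl, hqt]; simp
    have htU : t.count Step.U ≤ 1 := by
      by_cases hs : Step.H ∈ s
      · obtain ⟨a', b, rfl, ha'⟩ := split_first hs
        have := hone q (t ++ a') b (by rw [show (Step.H :: p') = q ++ Step.H :: t from hqt]; simp)
          (by simp [ht, ha'])
        simp [List.count_append] at this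
        omega
      · -- no H after p: total counts force at most one U after last H
        have hHs : s.count Step.H = 0 := List.count_eq_zero.mpr hs
        have htH : t.count Step.H = 0 := List.count_eq_zero.mpr ht
        have hwH : ((Step.H :: p') ++ s).count Step.H = n := hH
        have hwU : ((Step.H :: p') ++ s).count Step.U = n := hU
        rw [show (Step.H :: p') = q ++ Step.H :: t from hqt] at hwH hwU
        simp [List.count_append, List.count_cons, htH, hHs, hqU] at hwH hwU
        omega
    have htH : t.count Step.H = 0 := List.count_eq_zero.mpr ht
    rw [show (Step.H :: p') = q ++ Step.H :: t from hqt]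
    simp [List.count_append, List.count_cons, htH, hqU]
    omega
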